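/- arXiv:1909.01291 — 5 statements merged into one kernel-verified Lean document; each statement's English description precedes it below -/
import Mathlib

section
/- The vectors w_0, ..., w_{n-1} in ℝ^n with coordinates w_k^{(j)} = √(2/n) · sin(2πkj/n + π/4) form an orthonormal family: ⟨w_k, w_l⟩ = δ_{k,l} for all k, l ∈ {0, ..., n-1}. -/
open Real Finset

lemma aux_exp_sum (n : ℕ) (hn : 1 ≤ n) (m : ℤ) :
    ∑ j ∈ Finset.range n, Complex.exp (2 * Real.pi * Complex.I * m * j / n)
      = if (n : ℤ) ∣ m then (n : ℂ) else 0 := by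
  have hn0 : (n : ℂ) ≠ 0 := Nat.cast_ne_zero.mpr (by omega)
  set ζ : ℂ := Complex.exp (2 * Real.pi * Complex.I * m / n) with hζ
  have hpow : ∀ j : ℕ, Complex.exp (2 * Real.pi * Complex.I * m * j / n) = ζ ^ j := by
    intro j
    rw [hζ, ← Complex.exp_nat_mul]
    ring_nf
  have hζn : ζ ^ n = 1 := by
    rw [hζ, ← Complex.exp_nat_mul]
    have : (n : ℂ) * (2 * Real.pi * Complex.I * m / n) = m * (2 * Real.pi * Complex.I) := by
      field_simp
    rw [this]
    exact Complex.exp_int_mul_two_pi_mul_I m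
  have hζ1 : ζ = 1 ↔ (n : ℤ) ∣ m := by
    rw [hζ, Complex.exp_eq_one_iff]
    constructor
    · rintro ⟨c, hc⟩
      refine ⟨c, ?_⟩
      have hπ : (Real.pi : ℂ) ≠ 0 := by exact_mod_cast Real.pi_ne_zero
      have hI : Complex.I ≠ 0 := Complex.I_ne_zero
      have : (m : ℂ) = (n : ℂ) * c := by
        have h2 : (2 * (Real.pi:ℂ) * Complex.I) ≠ 0 := by
          simp [Real.pi_ne_zero, Complex.I_ne_zero]
        have hc' : 2 * (Real.pi:ℂ) * Complex.I * m = 2 * (Real.pi:ℂ) * Complex.I * ((n:ℂ) * c) := by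
          field_simp at hc
          linear_combination (2 * (Real.pi:ℂ) * Complex.I) * hc
        exact mul_left_cancel₀ h2 hc'
      exact_mod_cast this
    · rintro ⟨c, rfl⟩
      exact ⟨c, by field_simp; simp⟩
  simp_rw [hpow]
  by_cases h : (n : ℤ) ∣ m
  · rw [if_pos h, (hζ1.mpr h)]
    simp
  · rw [if_neg h]
    have hne : ζ ≠ 1 := fun hh => h (hζ1.mp hh)
    rw [geom_sum_eq hne, hζn]
    simp

lemma aux_exp_eq (n : ℕ) (m : ℤ) (j : ℕ) :
    Complex.exp (2 * Real.pi * Complex.I * m * j / n)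
      = Complex.exp (((2 * Real.pi * m * j / n : ℝ) : ℂ) * Complex.I) := by
  congr 1
  push_cast
  ring

lemma aux_cos_sum (n : ℕ) (hn : 1 ≤ n) (m : ℤ) :
    ∑ j ∈ Finset.range n, Real.cos (2 * Real.pi * m * j / n)
      = if (n : ℤ) ∣ m then (n : ℝ) else 0 := by
  have h := aux_exp_sum n hn m
  simp_rw [aux_exp_eq n m] at h
  have h2 := congrArg Complex.re h
  rw [Complex.re_sum] at h2
  simp_rw [Complex.exp_ofReal_mul_I_re] at h2
  rw [h2]
  split <;> simp

lemma aux_sin_sum (n : ℕ) (hn : 1 ≤ n) (m : ℤ) :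
    ∑ j ∈ Finset.range n, Real.sin (2 * Real.pi * m * j / n) = 0 := by
  have h := aux_exp_sum n hn m
  simp_rw [aux_exp_eq n m] at h
  have h2 := congrArg Complex.im h
  rw [Complex.im_sum] at h2
  simp_rw [Complex.exp_ofReal_mul_I_im] at h2
  rw [h2]
  split <;> simp

theorem stmt_5 (n : ℕ) (hn : 1 ≤ n)
    (w : Fin n → Fin n → ℝ)
    (hw : ∀ k j : Fin n,
      w k j = Real.sqrt (2 / n) * Real.sin (2 * Real.pi * k * j / n + Real.pi / 4)) :
    ∀ k l : Fin n, ∑ j : Fin n, w k j * w l j = if k = l then 1 else 0 := by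
  intro k l
  have hn0 : (n : ℝ) ≠ 0 := Nat.cast_ne_zero.mpr (by omega)
  set m1 : ℤ := (k : ℤ) - (l : ℤ) with hm1
  set m2 : ℤ := (k : ℤ) + (l : ℤ) with hm2
  have hsq : Real.sqrt (2 / n) * Real.sqrt (2 / n) = 2 / n :=
    Real.mul_self_sqrt (by positivity)
  have h2 : Real.sqrt 2 * Real.sqrt 2 = 2 := Real.mul_self_sqrt (by norm_num)
  have step : ∀ j : ℕ,
      Real.sqrt (2 / n) * Real.sin (2 * Real.pi * k * j / n + Real.pi / 4) *
        (Real.sqrt (2 / n) * Real.sin (2 * Real.pi * l * j / n + Real.pi / 4))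
      = (1 / n) * Real.cos (2 * Real.pi * (m1 : ℝ) * j / n)
        + (1 / n) * Real.sin (2 * Real.pi * (m2 : ℝ) * j / n) := by
    intro j
    set α : ℝ := 2 * Real.pi * k * j / n with hα
    set β : ℝ := 2 * Real.pi * l * j / n with hβ
    have e1 : Real.sin (α + Real.pi / 4) * Real.sin (β + Real.pi / 4)
        = (Real.cos (α - β) + Real.sin (α + β)) / 2 := by
      rw [Real.sin_add α, Real.sin_add β, Real.cos_sub, Real.sin_add α β,
        Real.sin_pi_div_four, Real.cos_pi_div_four]
      linear_combination ((Real.sin α + Real.cos α) * (Real.sin β + Real.cos β) / 4) * h2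
    have eαβ1 : α - β = 2 * Real.pi * (m1 : ℝ) * j / n := by
      rw [hα, hβ, hm1]; push_cast; ring
    have eαβ2 : α + β = 2 * Real.pi * (m2 : ℝ) * j / n := by
      rw [hα, hβ, hm2]; push_cast; ring
    calc Real.sqrt (2 / n) * Real.sin (α + Real.pi / 4) *
          (Real.sqrt (2 / n) * Real.sin (β + Real.pi / 4))
        = (2 / n) * (Real.sin (α + Real.pi / 4) * Real.sin (β + Real.pi / 4)) := by
          linear_combination (Real.sin (α + Real.pi / 4) * Real.sin (β + Real.pi / 4)) * hsq
      _ = (2 / n) * ((Real.cos (α - β) + Real.sin (α + β)) / 2) := by rw [e1]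
      _ = (1 / n) * Real.cos (2 * Real.pi * (m1 : ℝ) * j / n)
            + (1 / n) * Real.sin (2 * Real.pi * (m2 : ℝ) * j / n) := by
          rw [eαβ1, eαβ2]; ring
  have hsum : ∑ j : Fin n, w k j * w l j
      = ∑ j ∈ Finset.range n, ((1 / n) * Real.cos (2 * Real.pi * (m1 : ℝ) * j / n)
          + (1 / n) * Real.sin (2 * Real.pi * (m2 : ℝ) * j / n)) := by
    simp_rw [hw]
    rw [Fin.sum_univ_eq_sum_range (fun j : ℕ =>
      Real.sqrt (2 / n) * Real.sin (2 * Real.pi * k * j / n + Real.pi / 4) *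
        (Real.sqrt (2 / n) * Real.sin (2 * Real.pi * l * j / n + Real.pi / 4))) n]
    exact Finset.sum_congr rfl fun j _ => step j
  rw [hsum, Finset.sum_add_distrib, ← Finset.mul_sum, ← Finset.mul_sum,
    aux_cos_sum n hn m1, aux_sin_sum n hn m2, mul_zero, add_zero]
  have hdvd : (n : ℤ) ∣ m1 ↔ k = l := by
    constructor
    · intro h
      have hk := k.isLt
      have hl := l.isLt
      have : m1 = 0 := Int.eq_zero_of_abs_lt_dvd h (by
        rw [hm1, abs_lt]; omega)
      exact Fin.ext (by omega)
    · intro h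
      rw [hm1, h, sub_self]; exact dvd_zero _
  by_cases hkl : k = l
  · rw [if_pos (hdvd.mpr hkl), if_pos hkl]
    field_simp
  · rw [if_neg (fun h => hkl (hdvd.mp h)), if_neg hkl, mul_zero]
end

section
/- The n×n matrix Q whose (j,k) entry is √(2/n) · sin(2πkj/n + π/4) is orthogonal and symmetric. -/
open Real Matrix

lemma sum_exp_aux (n : ℕ) (hn : 0 < n) (m : ℤ) :
    ∑ k : Fin n, Complex.exp (((2 * Real.pi * m * k / n : ℝ) : ℂ) * Complex.I)
      = if (n : ℤ) ∣ m then (n : ℂ) else 0 := by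
  have hn' : (n : ℝ) ≠ 0 := Nat.cast_ne_zero.mpr hn.ne'
  set ζ : ℂ := Complex.exp (((2 * Real.pi * m / n : ℝ) : ℂ) * Complex.I) with hζ
  have hterm : ∀ k : Fin n,
      Complex.exp (((2 * Real.pi * m * k / n : ℝ) : ℂ) * Complex.I) = ζ ^ (k : ℕ) := by
    intro k
    rw [hζ, ← Complex.exp_nat_mul]
    congr 1
    push_cast
    ring
  simp_rw [hterm]
  rw [Fin.sum_univ_eq_sum_range (fun k => ζ ^ k)]
  by_cases hdvd : (n : ℤ) ∣ m
  · obtain ⟨c, hc⟩ := hdvd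
    have hζ1 : ζ = 1 := by
      rw [hζ]
      have hr : (2 * Real.pi * m / n : ℝ) = c * (2 * Real.pi) := by
        rw [hc]; push_cast; field_simp
      have : ((2 * Real.pi * m / n : ℝ) : ℂ) * Complex.I = c * (2 * Real.pi * Complex.I) := by
        rw [hr]; push_cast; ring
      rw [this, Complex.exp_int_mul_two_pi_mul_I]
    rw [if_pos ⟨c, hc⟩]
    simp [hζ1]
  · have hζne : ζ ≠ 1 := by
      intro h
      rw [hζ, Complex.exp_eq_one_iff] at h
      obtain ⟨t, ht⟩ := h
      have him := congrArg Complex.im ht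
      simp [Complex.mul_im, Complex.ofReal_im, Complex.ofReal_re] at him
      have hπ : (0 : ℝ) < Real.pi := Real.pi_pos
      have h3 : 2 * Real.pi * (m : ℝ) = (t : ℝ) * (2 * Real.pi) * n := by
        field_simp at him
        rw [him]; ring
      have h4 : (m : ℝ) = t * n := by
        apply mul_left_cancel₀ (show (2 * Real.pi : ℝ) ≠ 0 by positivity)
        linarith [h3]
      have : m = t * n := by exact_mod_cast h4
      exact hdvd ⟨t, by linarith⟩
    have hζn : ζ ^ n = 1 := by
      rw [hζ, ← Complex.exp_nat_mul]
      have hr : (n : ℝ) * (2 * Real.pi * m / n) = 2 * Real.pi * m := by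
        field_simp
      have : (n : ℂ) * (((2 * Real.pi * m / n : ℝ) : ℂ) * Complex.I)
          = m * (2 * Real.pi * Complex.I) := by
        calc (n : ℂ) * (((2 * Real.pi * m / n : ℝ) : ℂ) * Complex.I)
            = (((n : ℝ) * (2 * Real.pi * m / n) : ℝ) : ℂ) * Complex.I := by push_cast; ring
          _ = (((2 * Real.pi * m : ℝ)) : ℂ) * Complex.I := by rw [hr]
          _ = m * (2 * Real.pi * Complex.I) := by push_cast; ring
      rw [this, Complex.exp_int_mul_two_pi_mul_I]
    rw [geom_sum_eq hζne, hζn]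
    simp [hdvd]

lemma sum_cos_aux (n : ℕ) (hn : 0 < n) (m : ℤ) :
    ∑ k : Fin n, Real.cos (2 * Real.pi * m * k / n) = if (n : ℤ) ∣ m then (n : ℝ) else 0 := by
  have h := congrArg Complex.re (sum_exp_aux n hn m)
  rw [Complex.re_sum] at h
  simp_rw [Complex.exp_ofReal_mul_I_re] at h
  rw [h]
  split <;> simp

lemma sum_sin_aux (n : ℕ) (hn : 0 < n) (m : ℤ) :
    ∑ k : Fin n, Real.sin (2 * Real.pi * m * k / n) = 0 := by
  have h := congrArg Complex.im (sum_exp_aux n hn m)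
  rw [Complex.im_sum] at h
  simp_rw [Complex.exp_ofReal_mul_I_im] at h
  rw [h]
  split <;> simp

theorem stmt_6 (n : ℕ) (hn : 1 ≤ n)
    (Q : Matrix (Fin n) (Fin n) ℝ)
    (hQ : ∀ j k : Fin n,
      Q j k = Real.sqrt (2 / n) * Real.sin (2 * Real.pi * k * j / n + Real.pi / 4)) :
    Qᵀ = Q ∧ Q * Qᵀ = 1 := by
  have hn0 : 0 < n := hn
  have hnR : (0 : ℝ) < n := by exact_mod_cast hn0
  constructor
  · ext j k
    rw [Matrix.transpose_apply, hQ j k, hQ k j]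
    ring_nf
  · ext j j'
    rw [Matrix.mul_apply, Matrix.one_apply]
    have hsq : Real.sqrt (2 / n) * Real.sqrt (2 / n) = 2 / n :=
      Real.mul_self_sqrt (by positivity)
    set m1 : ℤ := (j : ℤ) - (j' : ℤ) with hm1
    set m2 : ℤ := (j : ℤ) + (j' : ℤ) with hm2
    have key : ∀ k : Fin n, Q j k * Qᵀ k j'
        = (2 / n) * ((Real.cos (2 * Real.pi * m1 * k / n)
            + Real.sin (2 * Real.pi * m2 * k / n)) / 2) := by
      intro k
      rw [Matrix.transpose_apply, hQ j k, hQ j' k]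
      set a : ℝ := 2 * Real.pi * k * j / n with ha
      set b : ℝ := 2 * Real.pi * k * j' / n with hb
      have hC : 2 * Real.pi * (m1 : ℝ) * k / n = a - b := by
        rw [ha, hb, hm1]; push_cast; ring
      have hD : 2 * Real.pi * (m2 : ℝ) * k / n = a + b := by
        rw [ha, hb, hm2]; push_cast; ring
      rw [hC, hD]
      simp only [Real.sin_add, Real.cos_sub, Real.sin_pi_div_four, Real.cos_pi_div_four]
      rw [mul_mul_mul_comm, hsq]
      have h2 : Real.sqrt 2 * Real.sqrt 2 = 2 := Real.mul_self_sqrt (by norm_num)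
      have hnne : (n : ℝ) ≠ 0 := ne_of_gt hnR
      field_simp
      ring_nf
      rw [Real.sq_sqrt (by norm_num : (0:ℝ) ≤ 2)]
      ring
    rw [Finset.sum_congr rfl (fun k _ => key k)]
    rw [← Finset.mul_sum, ← Finset.sum_div, Finset.sum_add_distrib,
      sum_cos_aux n hn0 m1, sum_sin_aux n hn0 m2]
    have hdvd_iff : (n : ℤ) ∣ m1 ↔ j = j' := by
      constructor
      · intro h
        have hj : ((j : ℕ) : ℤ) < n := by exact_mod_cast j.isLt
        have hj' : ((j' : ℕ) : ℤ) < n := by exact_mod_cast j'.isLt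
        have hm0 : m1 = 0 := by
          by_contra hne
          have := Int.le_of_dvd (abs_pos.mpr hne) ((dvd_abs _ _).mpr h)
          rw [hm1] at this hne
          rcases abs_cases ((j : ℤ) - (j' : ℤ)) with ⟨h1, h2⟩ | ⟨h1, h2⟩ <;> omega
        have : (j : ℕ) = (j' : ℕ) := by omega
        exact Fin.ext this
      · intro h; subst h; simp [hm1]
    by_cases h : j = j'
    · rw [if_pos (hdvd_iff.mpr h), if_pos h]
      field_simp
      simp
    · rw [if_neg (fun hd => h (hdvd_iff.mp hd)), if_neg h]
      simp
end

section
/- The matrix P(Λ) = QΛQ^T is doubly stochastic (all entries nonnegative, with symmetric P(Λ) and all rows summing to 1) if and only if ∑_{j=1}^{n-1} λ_j sin(2πkj/n + π/4) sin(2πlj/n + π/4) ≥ -1/2 for all k, l ∈ {0, ..., n-1}. -/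
open Real Matrix Finset

lemma expsum (n c : ℕ) (hc0 : 0 < c) (hcn : c < n) :
    ∑ i : Fin n, Real.sin (2 * Real.pi * c * i / n + Real.pi / 4) = 0 := by
  have hn1 : 0 < n := by omega
  have hn0 : (n:ℝ) ≠ 0 := by exact_mod_cast hn1.ne'
  have hnc : (n:ℂ) ≠ 0 := by exact_mod_cast hn1.ne'
  set θ : ℝ := 2 * Real.pi * c / n with hθ
  set ζ : ℂ := Complex.exp (θ * Complex.I) with hζ
  have hζ1 : ζ ≠ 1 := by
    rw [hζ, Ne, Complex.exp_eq_one_iff]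
    rintro ⟨m, hm⟩
    have him : θ = m * (2 * Real.pi) := by
      have := congrArg Complex.im hm
      simpa using this
    have hcr : (c:ℝ) = m * n := by
      rw [hθ] at him
      field_simp at him
      nlinarith [Real.pi_pos, him]
    have hm0 : 0 < m := by
      have h1 : (0:ℝ) < (m:ℝ) * n := by rw [← hcr]; exact_mod_cast hc0
      have : (0:ℝ) < (m:ℝ) := by
        rcases lt_trichotomy ((m:ℝ)) 0 with h|h|h
        · nlinarith [show (0:ℝ) < n by positivity]
        · simp [h] at h1
        · exact h
      exact_mod_cast this
    have hm1 : (m:ℝ) < 1 := by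
      have hnn : (0:ℝ) < n := by positivity
      have : (m:ℝ) * n < 1 * n := by rw [← hcr, one_mul]; exact_mod_cast hcn
      exact lt_of_mul_lt_mul_right this hnn.le
    have : m < 1 := by exact_mod_cast hm1
    omega
  have hζn : ζ ^ n = 1 := by
    rw [hζ, ← Complex.exp_nat_mul]
    have h1 : (n:ℂ) * (↑θ * Complex.I) = c * (2 * Real.pi * Complex.I) := by
      rw [hθ]; push_cast; field_simp
    rw [h1, Complex.exp_nat_mul, Complex.exp_two_pi_mul_I, one_pow]
  have hsum : ∑ i : Fin n, ζ ^ (i:ℕ) = 0 := by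
    rw [Fin.sum_univ_eq_sum_range (fun i => ζ ^ i), geom_sum_eq hζ1, hζn]
    simp
  have him : ∀ i : Fin n,
      Real.sin (2 * Real.pi * c * i / n + Real.pi / 4)
        = (Complex.exp ((Real.pi/4 : ℝ) * Complex.I) * ζ ^ (i:ℕ)).im := by
    intro i
    rw [hζ, ← Complex.exp_nat_mul, ← Complex.exp_add]
    have h2 : (Real.pi/4 : ℝ) * Complex.I + (i:ℕ) * ((θ:ℂ) * Complex.I)
        = ((2 * Real.pi * c * i / n + Real.pi / 4 : ℝ) : ℂ) * Complex.I := by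
      rw [hθ]; push_cast; field_simp; ring
    rw [h2, Complex.exp_ofReal_mul_I_im]
  rw [Finset.sum_congr rfl (fun i _ => him i), ← Complex.im_sum, ← Finset.mul_sum, hsum,
    mul_zero, Complex.zero_im]

theorem stmt_9 (n : ℕ) (hn : 1 ≤ n)
    (Q : Matrix (Fin n) (Fin n) ℝ)
    (hQ : ∀ k j : Fin n,
      Q k j = Real.sqrt (2 / n) * Real.sin (2 * Real.pi * k * j / n + Real.pi / 4))
    (lam : Fin n → ℝ) (hlam0 : lam ⟨0, by omega⟩ = 1)
    (hlam : ∀ j : Fin n, j ≠ ⟨0, by omega⟩ → lam j ∈ Set.Icc (-1 : ℝ) 1) :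
    ((∀ k l : Fin n, 0 ≤ (Q * Matrix.diagonal lam * Qᵀ) k l) ∧
     (∀ k : Fin n, ∑ l : Fin n, (Q * Matrix.diagonal lam * Qᵀ) k l = 1) ∧
     (∀ l : Fin n, ∑ k : Fin n, (Q * Matrix.diagonal lam * Qᵀ) k l = 1)) ↔
    (∀ k l : Fin n,
      ∑ j ∈ Finset.univ \ {(⟨0, by omega⟩ : Fin n)},
        lam j * Real.sin (2 * Real.pi * k * j / n + Real.pi / 4)
              * Real.sin (2 * Real.pi * l * j / n + Real.pi / 4) ≥ -(1 / 2)) := by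
  set z : Fin n := ⟨0, by omega⟩ with hz
  have hnpos : (0:ℝ) < n := by positivity
  have hn0 : (n:ℝ) ≠ 0 := hnpos.ne'
  have hsq : Real.sqrt (2/n) * Real.sqrt (2/n) = 2/n :=
    Real.mul_self_sqrt (by positivity)
  have hsq2 : Real.sqrt 2 * Real.sqrt 2 = 2 := Real.mul_self_sqrt (by norm_num)
  have hzR : ((z : Fin n) : ℝ) = 0 := by simp [hz]
  have hP : ∀ k l : Fin n, (Q * Matrix.diagonal lam * Qᵀ) k l
      = ∑ j : Fin n, Q k j * lam j * Q l j := by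
    intro k l
    rw [Matrix.mul_apply]
    exact Finset.sum_congr rfl fun j _ => by
      rw [Matrix.mul_diagonal, Matrix.transpose_apply]
  -- entry formula
  have hentry : ∀ k l : Fin n, (Q * Matrix.diagonal lam * Qᵀ) k l
      = (2/n) * (1/2 + ∑ j ∈ Finset.univ \ {z},
        lam j * Real.sin (2 * Real.pi * k * j / n + Real.pi / 4)
              * Real.sin (2 * Real.pi * l * j / n + Real.pi / 4)) := by
    intro k l
    rw [hP]
    have h1 : ∀ j : Fin n, Q k j * lam j * Q l j
        = (2/n) * (lam j * Real.sin (2 * Real.pi * k * j / n + Real.pi / 4)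
              * Real.sin (2 * Real.pi * l * j / n + Real.pi / 4)) := by
      intro j
      calc Q k j * lam j * Q l j
          = (Real.sqrt (2/n) * Real.sqrt (2/n))
            * (lam j * Real.sin (2 * Real.pi * k * j / n + Real.pi / 4)
              * Real.sin (2 * Real.pi * l * j / n + Real.pi / 4)) := by
            rw [hQ k j, hQ l j]; ring
        _ = _ := by rw [hsq]
    rw [Finset.sum_congr rfl (fun j _ => h1 j), ← Finset.mul_sum]
    congr 1
    rw [Finset.sum_eq_sum_sdiff_singleton_add (Finset.mem_univ z)]
    have hzval : lam z * Real.sin (2 * Real.pi * k * z / n + Real.pi / 4)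
        * Real.sin (2 * Real.pi * l * z / n + Real.pi / 4) = 1/2 := by
      rw [hzR, hlam0]
      simp [Real.sin_pi_div_four]
      nlinarith [hsq2]
    rw [hzval]; ring
  -- column sums of Q vanish off zero
  have hcolQ : ∀ j : Fin n, j ≠ z → ∑ l : Fin n, Q l j = 0 := by
    intro j hj
    have hj0 : 0 < (j:ℕ) :=
      Nat.pos_of_ne_zero (fun h => hj (Fin.ext (by simp [hz, h])))
    have := expsum n (j:ℕ) hj0 j.isLt
    calc ∑ l : Fin n, Q l j
        = ∑ l : Fin n, Real.sqrt (2/n)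
            * Real.sin (2 * Real.pi * (j:ℕ) * (l:ℕ) / n + Real.pi / 4) := by
          refine Finset.sum_congr rfl (fun l _ => ?_)
          rw [hQ l j]
          congr 2
          push_cast; ring
      _ = Real.sqrt (2/n) * ∑ l : Fin n,
            Real.sin (2 * Real.pi * (j:ℕ) * (l:ℕ) / n + Real.pi / 4) := by
          rw [Finset.mul_sum]
      _ = 0 := by rw [this, mul_zero]
  have hcolQ0 : ∑ l : Fin n, Q l z = n * (Real.sqrt (2/n) * (Real.sqrt 2 / 2)) := by
    have : ∀ l : Fin n, Q l z = Real.sqrt (2/n) * (Real.sqrt 2 / 2) := by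
      intro l
      rw [hQ l z, hzR]
      simp [Real.sin_pi_div_four]
    rw [Finset.sum_congr rfl (fun l _ => this l), Finset.sum_const, Finset.card_univ,
      Fintype.card_fin, nsmul_eq_mul]
  have hQz : ∀ k : Fin n, Q k z = Real.sqrt (2/n) * (Real.sqrt 2 / 2) := by
    intro k
    rw [hQ k z, hzR]
    simp [Real.sin_pi_div_four]
  have hval : (Real.sqrt (2/n) * (Real.sqrt 2 / 2)) * (n * (Real.sqrt (2/n) * (Real.sqrt 2 / 2))) = 1 := by
    calc (Real.sqrt (2/n) * (Real.sqrt 2 / 2)) * (n * (Real.sqrt (2/n) * (Real.sqrt 2 / 2)))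
        = (Real.sqrt (2/n) * Real.sqrt (2/n)) * (Real.sqrt 2 * Real.sqrt 2) * n / 4 := by ring
      _ = (2/n) * 2 * n / 4 := by rw [hsq, hsq2]
      _ = 1 := by field_simp; norm_num
  -- row sums
  have hrow : ∀ k : Fin n, ∑ l : Fin n, (Q * Matrix.diagonal lam * Qᵀ) k l = 1 := by
    intro k
    have : ∑ l : Fin n, (Q * Matrix.diagonal lam * Qᵀ) k l
        = ∑ j : Fin n, Q k j * lam j * (∑ l : Fin n, Q l j) := by
      rw [Finset.sum_congr rfl (fun l _ => hP k l), Finset.sum_comm]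
      exact Finset.sum_congr rfl (fun j _ => by rw [Finset.mul_sum])
    rw [this, Finset.sum_eq_single z]
    · rw [hQz k, hlam0, hcolQ0, mul_one]
      exact hval
    · intro j _ hj
      rw [hcolQ j hj, mul_zero]
    · intro h; exact absurd (Finset.mem_univ z) h
  have hcol : ∀ l : Fin n, ∑ k : Fin n, (Q * Matrix.diagonal lam * Qᵀ) k l = 1 := by
    intro l
    have : ∑ k : Fin n, (Q * Matrix.diagonal lam * Qᵀ) k l
        = ∑ j : Fin n, (∑ k : Fin n, Q k j) * lam j * Q l j := by
      rw [Finset.sum_congr rfl (fun k _ => hP k l), Finset.sum_comm]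
      refine Finset.sum_congr rfl (fun j _ => ?_)
      rw [Finset.sum_mul, Finset.sum_mul]
    rw [this, Finset.sum_eq_single z]
    · rw [hQz l, hlam0, hcolQ0, mul_one]
      linear_combination hval
    · intro j _ hj
      rw [hcolQ j hj, zero_mul, zero_mul]
    · intro h; exact absurd (Finset.mem_univ z) h
  constructor
  · rintro ⟨h1, -, -⟩ k l
    have := h1 k l
    rw [hentry k l] at this
    have h2 : (0:ℝ) < 2/n := by positivity
    by_contra hS
    push_neg at hS
    have : (2/n) * (1/2 + ∑ j ∈ Finset.univ \ {z},
        lam j * Real.sin (2 * Real.pi * k * j / n + Real.pi / 4)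
              * Real.sin (2 * Real.pi * l * j / n + Real.pi / 4)) < 0 :=
      mul_neg_of_pos_of_neg h2 (by linarith)
    linarith
  · intro h
    refine ⟨fun k l => ?_, hrow, hcol⟩
    rw [hentry k l]
    have := h k l
    have h2 : (0:ℝ) ≤ 2/n := by positivity
    apply mul_nonneg h2
    linarith [this]
end

section
/- For n ≥ 2 odd, there is no symmetric doubly stochastic n×n matrix with spectrum (1, 0, 0, ..., 0, -1). -/
open Matrix Finset Polynomial

private lemma aux_charpoly_eq {n : ℕ} (A : Matrix (Fin n) (Fin n) ℝ) (hA : A.IsHermitian) :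
    A.charpoly = ∏ i : Fin n, (X - C (hA.eigenvalues i)) := by
  apply Polynomial.funext
  intro x
  have hev : A.charpoly.eval x = (Matrix.diagonal (fun _ : Fin n => x) - A).det := by
    rw [Matrix.charpoly, ← Polynomial.coe_evalRingHom, RingHom.map_det]
    congr 1
    ext i j
    by_cases h : i = j <;>
      simp [h, charmatrix_apply_eq, charmatrix_apply_ne, Matrix.diagonal, Matrix.sub_apply]
  set U : Matrix (Fin n) (Fin n) ℝ := (hA.eigenvectorUnitary : Matrix (Fin n) (Fin n) ℝ) with hUdef
  have hUU : U * star U = 1 := Matrix.mem_unitaryGroup_iff.mp hA.eigenvectorUnitary.2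
  have hofR : (RCLike.ofReal ∘ hA.eigenvalues : Fin n → ℝ) = hA.eigenvalues := by
    funext i; simp
  have hspec : A = U * Matrix.diagonal hA.eigenvalues * star U := by
    have := hA.spectral_theorem
    rwa [hofR] at this
  have hone : Matrix.diagonal (fun _ : Fin n => x) = x • (1 : Matrix (Fin n) (Fin n) ℝ) := by
    ext i j; by_cases h : i = j <;> simp [h, Matrix.one_apply, Matrix.diagonal]
  have key : Matrix.diagonal (fun _ : Fin n => x) - A
      = U * (Matrix.diagonal (fun i => x - hA.eigenvalues i)) * star U := by
    have hds : Matrix.diagonal (fun i => x - hA.eigenvalues i)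
        = Matrix.diagonal (fun _ : Fin n => x) - Matrix.diagonal hA.eigenvalues := by
      rw [Matrix.diagonal_sub]
    rw [hds, Matrix.mul_sub, Matrix.sub_mul, ← hspec, hone]
    congr 1
    rw [mul_smul_comm, smul_mul_assoc, mul_one, hUU]
  have hdetU : U.det * (star U).det = 1 := by
    rw [← Matrix.det_mul, hUU, Matrix.det_one]
  rw [hev, key, Matrix.det_mul, Matrix.det_mul, Matrix.det_diagonal, eval_prod]
  simp only [eval_sub, eval_X, eval_C]
  linear_combination (∏ i, (x - hA.eigenvalues i)) * hdetU

private lemma aux_trace_sq {n : ℕ} (A : Matrix (Fin n) (Fin n) ℝ) (hA : A.IsHermitian) :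
    Matrix.trace (A * A) = ∑ i, hA.eigenvalues i ^ 2 := by
  set U : Matrix (Fin n) (Fin n) ℝ := (hA.eigenvectorUnitary : Matrix (Fin n) (Fin n) ℝ) with hUdef
  set D : Matrix (Fin n) (Fin n) ℝ := Matrix.diagonal hA.eigenvalues with hDdef
  have hsUU : star U * U = 1 := Matrix.mem_unitaryGroup_iff'.mp hA.eigenvectorUnitary.2
  have hofR : (RCLike.ofReal ∘ hA.eigenvalues : Fin n → ℝ) = hA.eigenvalues := by
    funext i; simp
  have hspec : A = U * D * star U := by
    have := hA.spectral_theorem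
    rwa [hofR] at this
  have step2 : (U * D * star U) * (U * D * star U) = U * D * (star U * U) * (D * star U) := by
    simp only [Matrix.mul_assoc]
  have step1 : U * D * (star U * U) * (D * star U) = U * (D * D) * star U := by
    rw [hsUU]
    simp only [Matrix.mul_assoc, Matrix.mul_one, Matrix.one_mul]
  have key : A * A = U * (D * D) * star U := by
    calc A * A = (U * D * star U) * (U * D * star U) := by rw [← hspec]
    _ = _ := by rw [step2, step1]
  rw [key, Matrix.trace_mul_cycle, ← Matrix.mul_assoc, hsUU, Matrix.one_mul, hDdef,
    Matrix.diagonal_mul_diagonal, Matrix.trace_diagonal]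
  exact Finset.sum_congr rfl fun i _ => (sq _).symm

private lemma aux_roots {n : ℕ} (μ : Fin n → ℝ)
    (h : ∏ i : Fin n, (X - C (μ i)) = (X - 1) * (X + 1) * X ^ (n - 2)) :
    Multiset.map μ Finset.univ.val = 1 ::ₘ (-1) ::ₘ Multiset.replicate (n-2) 0 := by
  have hmm : Multiset.map (fun i => X - C (μ i)) Finset.univ.val
      = Multiset.map (fun a : ℝ => X - C a) (Multiset.map μ Finset.univ.val) := by
    rw [Multiset.map_map]; rfl
  have hL : (∏ i : Fin n, (X - C (μ i))).roots = Multiset.map μ Finset.univ.val := by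
    rw [Finset.prod_eq_multiset_prod, hmm]
    exact Polynomial.roots_multiset_prod_X_sub_C _
  have e1 : ((X : ℝ[X]) - 1) = X - C 1 := by rw [Polynomial.C_1]
  have e2 : ((X : ℝ[X]) + 1) = X - C (-1) := by rw [Polynomial.C_neg, Polynomial.C_1]; ring
  have h1 : ((X : ℝ[X]) - 1) ≠ 0 := by rw [e1]; exact X_sub_C_ne_zero 1
  have h2 : ((X : ℝ[X]) + 1) ≠ 0 := by rw [e2]; exact X_sub_C_ne_zero (-1)
  have h3 : ((X : ℝ[X]) ^ (n - 2)) ≠ 0 := pow_ne_zero _ X_ne_zero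
  have hR : (((X : ℝ[X]) - 1) * (X + 1) * X ^ (n - 2)).roots
      = 1 ::ₘ (-1) ::ₘ Multiset.replicate (n-2) 0 := by
    rw [Polynomial.roots_mul (mul_ne_zero (mul_ne_zero h1 h2) h3),
        Polynomial.roots_mul (mul_ne_zero h1 h2), e1, e2,
        Polynomial.roots_X_sub_C, Polynomial.roots_X_sub_C,
        Polynomial.roots_pow, Polynomial.roots_X]
    rw [Multiset.nsmul_singleton]
    simp [Multiset.singleton_add]
  rw [← hL, h, hR]

theorem stmt_15 (n : ℕ) (hn : 2 ≤ n) (hodd : Odd n) :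
    ¬ ∃ A : Matrix (Fin n) (Fin n) ℝ,
      Aᵀ = A ∧
      (∀ k l : Fin n, 0 ≤ A k l) ∧
      (∀ k : Fin n, ∑ l : Fin n, A k l = 1) ∧
      (∀ l : Fin n, ∑ k : Fin n, A k l = 1) ∧
      A.charpoly =
        (Polynomial.X - 1) * (Polynomial.X + 1) * Polynomial.X ^ (n - 2) := by

  rintro ⟨A, hsym, hpos, hrow, hcol, hcp⟩
  have hnR : (0 : ℝ) < n := by exact_mod_cast Nat.lt_of_lt_of_le Nat.zero_lt_two hn
  have hnne : (n : ℝ) ≠ 0 := ne_of_gt hnR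
  have hA : A.IsHermitian := by
    rw [Matrix.IsHermitian, conjTranspose_eq_transpose_of_trivial]
    exact hsym
  set μ : Fin n → ℝ := hA.eigenvalues with hμ
  have hcp2 : ∏ i : Fin n, (X - C (μ i)) = (X - 1) * (X + 1) * X ^ (n - 2) := by
    rw [← aux_charpoly_eq A hA, hcp]
  have hmul := aux_roots μ hcp2
  have hsum2 : ∑ i, μ i ^ 2 = 2 := by
    have h0 : ∑ i, μ i ^ 2
        = (Multiset.map (fun t : ℝ => t ^ 2) (Multiset.map μ Finset.univ.val)).sum := by
      rw [Multiset.map_map]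
      rfl
    rw [h0, hmul]
    simp [Multiset.map_replicate]
    norm_num
  have hmem : (-1 : ℝ) ∈ Multiset.map μ Finset.univ.val := by
    rw [hmul]; simp
  obtain ⟨j, -, hj⟩ := Multiset.mem_map.mp hmem
  set v : Fin n → ℝ := ⇑(hA.eigenvectorBasis j) with hvdef
  have hv2 : ∑ i, v i ^ 2 = 1 := by
    have hnrm := hA.eigenvectorBasis.orthonormal.1 j
    rw [EuclideanSpace.norm_eq, Real.sqrt_eq_one] at hnrm
    rw [← hnrm]
    refine Finset.sum_congr rfl fun i _ => ?_
    rw [Real.norm_eq_abs, sq_abs]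
  have hAv : ∀ i, ∑ k, A i k * v k = -(v i) := by
    intro i
    have h1 := congrFun (hA.mulVec_eigenvectorBasis j) i
    rw [← hμ, hj] at h1
    simpa [Matrix.mulVec, dotProduct] using h1
  have hvsum : ∑ i, v i = 0 := by
    have h1 : ∑ i, ∑ k, A i k * v k = -∑ i, v i := by
      rw [← Finset.sum_neg_distrib]
      exact Finset.sum_congr rfl fun i _ => hAv i
    have h2 : ∑ i, ∑ k, A i k * v k = ∑ k, v k := by
      rw [Finset.sum_comm]
      refine Finset.sum_congr rfl fun k _ => ?_
      rw [← Finset.sum_mul, hcol k, one_mul]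
    rw [h2] at h1
    linarith
  have hAsq : ∑ i, ∑ k, A i k ^ 2 = 2 := by
    have ht := aux_trace_sq A hA
    rw [← hμ, hsum2] at ht
    rw [← ht, Matrix.trace]
    refine Finset.sum_congr rfl fun i _ => ?_
    rw [Matrix.diag_apply, Matrix.mul_apply]
    refine Finset.sum_congr rfl fun k _ => ?_
    have hik : A k i = A i k := congrFun (congrFun hsym i) k
    rw [hik, sq]
  have T2 : ∑ _i : Fin n, ∑ _k : Fin n, ((1:ℝ)/n)^2 = 1 := by
    rw [Finset.sum_const, Finset.sum_const, Finset.card_univ, Fintype.card_fin,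
      nsmul_eq_mul, nsmul_eq_mul]
    field_simp
  have T3 : ∑ i, ∑ k, (v i^2 * v k^2) = 1 := by
    have h3 : ∀ i, ∑ k, v i^2 * v k^2 = v i^2 := by
      intro i; rw [← Finset.mul_sum, hv2, mul_one]
    rw [Finset.sum_congr rfl fun i _ => h3 i, hv2]
  have T4 : ∑ i, ∑ k, (2*(1/(n:ℝ))*A i k) = 2 := by
    have h4 : ∀ i, ∑ k, 2*(1/(n:ℝ))*A i k = 2*(1/(n:ℝ)) := by
      intro i; rw [← Finset.mul_sum, hrow i, mul_one]
    rw [Finset.sum_congr rfl fun i _ => h4 i, Finset.sum_const, Finset.card_univ,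
      Fintype.card_fin, nsmul_eq_mul]
    field_simp
  have hS3 : ∑ i, ∑ k, A i k * (v i * v k) = -1 := by
    have h5 : ∀ i, ∑ k, A i k * (v i * v k) = -(v i^2) := by
      intro i
      have : ∑ k, A i k * (v i * v k) = v i * ∑ k, A i k * v k := by
        rw [Finset.mul_sum]
        exact Finset.sum_congr rfl fun k _ => by ring
      rw [this, hAv i]; ring
    rw [Finset.sum_congr rfl fun i _ => h5 i, Finset.sum_neg_distrib, hv2]
  have T5 : ∑ i, ∑ k, (2*(A i k * (v i * v k))) = -2 := by
    have h6 : ∀ i, ∑ k, 2*(A i k * (v i * v k)) = 2 * ∑ k, A i k * (v i * v k) := by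
      intro i; rw [Finset.mul_sum]
    rw [Finset.sum_congr rfl fun i _ => h6 i, ← Finset.mul_sum, hS3]
    norm_num
  have T6 : ∑ i, ∑ k, (2*(1/(n:ℝ))*(v i * v k)) = 0 := by
    have h7 : ∀ i, ∑ k, 2*(1/(n:ℝ))*(v i * v k) = 2*(1/(n:ℝ))*v i * ∑ k, v k := by
      intro i
      rw [Finset.mul_sum]
      exact Finset.sum_congr rfl fun k _ => by ring
    rw [Finset.sum_congr rfl fun i _ => h7 i]
    simp [hvsum]
  have key : ∑ i, ∑ k, (A i k - 1/n + v i * v k)^2 = 0 := by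
    calc ∑ i, ∑ k, (A i k - 1/n + v i * v k)^2
        = ∑ i, ∑ k, (A i k^2 + ((1:ℝ)/n)^2 + v i^2*v k^2 - 2*(1/(n:ℝ))*A i k
            + 2*(A i k*(v i * v k)) - 2*(1/(n:ℝ))*(v i * v k)) := by
          refine Finset.sum_congr rfl fun i _ => Finset.sum_congr rfl fun k _ => by ring
      _ = (∑ i, ∑ k, A i k^2) + (∑ _i : Fin n, ∑ _k : Fin n, ((1:ℝ)/n)^2)
            + (∑ i, ∑ k, v i^2*v k^2)
            - (∑ i, ∑ k, 2*(1/(n:ℝ))*A i k) + (∑ i, ∑ k, 2*(A i k*(v i * v k)))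
            - (∑ i, ∑ k, 2*(1/(n:ℝ))*(v i * v k)) := by
          simp only [Finset.sum_add_distrib, Finset.sum_sub_distrib]
      _ = 0 := by rw [hAsq, T2, T3, T4, T5, T6]; norm_num
  have hform : ∀ i k, A i k = 1/(n:ℝ) - v i * v k := by
    have hz := (Finset.sum_eq_zero_iff_of_nonneg
      (fun i _ => Finset.sum_nonneg fun k _ => sq_nonneg _)).mp key
    intro i k
    have hz2 := (Finset.sum_eq_zero_iff_of_nonneg
      (fun k _ => sq_nonneg _)).mp (hz i (Finset.mem_univ i)) k (Finset.mem_univ k)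
    have := pow_eq_zero_iff (n := 2) (by norm_num) |>.mp hz2
    linarith [this]
  have hdiagsum : ∑ i, A i i = 0 := by
    have h8 : ∀ i : Fin n, A i i = 1/(n:ℝ) - v i^2 := by
      intro i; rw [hform i i]; ring
    rw [Finset.sum_congr rfl fun i _ => h8 i, Finset.sum_sub_distrib, hv2,
      Finset.sum_const, Finset.card_univ, Fintype.card_fin, nsmul_eq_mul]
    field_simp
    ring
  have hdiag : ∀ i, A i i = 0 := by
    intro i
    exact (Finset.sum_eq_zero_iff_of_nonneg (fun i _ => hpos i i)).mp hdiagsum i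
      (Finset.mem_univ i)
  have hvsq : ∀ i, v i ^ 2 = 1/(n:ℝ) := by
    intro i
    have h9 := hform i i
    have h10 := hdiag i
    nlinarith [h9, h10]
  set c : ℝ := Real.sqrt (1/(n:ℝ)) with hcdef
  have hc : 0 < c := Real.sqrt_pos.mpr (by positivity)
  have hvc : ∀ i, v i = c ∨ v i = -c := by
    intro i
    have habs : |v i| = c := by rw [← Real.sqrt_sq_eq_abs, hvsq i]
    exact (abs_eq hc.le).mp habs
  set P : Finset (Fin n) := Finset.univ.filter (fun i => 0 < v i) with hPdef
  set Q : Finset (Fin n) := Finset.univ.filter (fun i => ¬ 0 < v i) with hQdef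
  have hsplit : ∑ i ∈ P, v i + ∑ i ∈ Q, v i = ∑ i, v i :=
    Finset.sum_filter_add_sum_filter_not Finset.univ _ v
  have hPsum : ∑ i ∈ P, v i = P.card * c := by
    rw [Finset.sum_congr rfl (fun i hi => ?_), Finset.sum_const, nsmul_eq_mul]
    rcases hvc i with h | h
    · exact h
    · exfalso
      have := (Finset.mem_filter.mp hi).2
      rw [h] at this
      linarith
  have hQsum : ∑ i ∈ Q, v i = -(Q.card * c) := by
    have : ∀ i ∈ Q, v i = -c := by
      intro i hi
      rcases hvc i with h | h
      · exfalso
        have h2 := (Finset.mem_filter.mp hi).2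
        rw [h] at h2
        exact h2 hc
      · exact h
    rw [Finset.sum_congr rfl this, Finset.sum_const, nsmul_eq_mul]
    ring
  have hcards : P.card + Q.card = n := by
    rw [hPdef, hQdef, Finset.card_filter_add_card_filter_not,
      Finset.card_univ, Fintype.card_fin]
  have hPQ : P.card = Q.card := by
    rw [hPsum, hQsum, hvsum] at hsplit
    have hcc : (P.card : ℝ) = Q.card := by
      have hmul2 : (P.card : ℝ) * c = (Q.card : ℝ) * c := by linarith
      exact mul_right_cancel₀ (ne_of_gt hc) hmul2
    exact_mod_cast hcc
  have heven : Even n := by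
    rw [← hcards, hPQ]
    exact ⟨Q.card, (two_mul Q.card).symm ▸ rfl⟩
  exact (Nat.not_even_iff_odd.mpr hodd) heven
end

section
/- The diagonal entries of H(v) Λ H(v), where H(v) is the Householder matrix for v = (1-√n, 1, ..., 1)^T and Λ = diag(1, λ_1, ..., λ_{n-1}), are given by (H(v)ΛH(v))_{k,k} = 1/n + α² ∑_{j=1, j≠k}^{n-1} λ_j + (1-α)² λ_k for k ∈ {1, ..., n-1}, where α = 1/(√n(√n - 1)). -/
open Real Matrix Finset

theorem stmt_17 (n : ℕ) (hn : 2 ≤ n)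
    (v : Fin n → ℝ) (hv : ∀ i : Fin n, v i = if i = ⟨0, by omega⟩ then 1 - Real.sqrt n else 1)
    (H : Matrix (Fin n) (Fin n) ℝ)
    (hH : H = 1 - (2 / ∑ i : Fin n, v i ^ 2) • Matrix.vecMulVec v v)
    (lam : Fin n → ℝ) (hlam0 : lam ⟨0, by omega⟩ = 1)
    (α : ℝ) (hα : α = 1 / (Real.sqrt n * (Real.sqrt n - 1))) :
    ∀ k : Fin n, k ≠ ⟨0, by omega⟩ →
      (H * Matrix.diagonal lam * H) k k =
        1 / n + α ^ 2 * (∑ j ∈ Finset.univ \ {(⟨0, by omega⟩ : Fin n), k}, lam j)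
          + (1 - α) ^ 2 * lam k := by
  intro k hk
  set e0 : Fin n := ⟨0, by omega⟩ with he0
  set s := Real.sqrt n with hsdef
  have hn0 : (0:ℝ) < n := by positivity
  have hs2 : s ^ 2 = n := Real.sq_sqrt (le_of_lt hn0)
  have hs1 : 1 < s := by
    have h1 : (1:ℝ) < n := by exact_mod_cast (by omega : 1 < n)
    nlinarith [Real.sqrt_nonneg (n:ℝ)]
  have hs0 : (0:ℝ) < s := by linarith
  have hsum : ∑ i : Fin n, v i ^ 2 = 2 * s * (s - 1) := by
    have h1 : ∀ i : Fin n, v i ^ 2 = 1 + (if i = e0 then (1 - s) ^ 2 - 1 else 0) := by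
      intro i; rw [hv i]; split <;> simp
    rw [Finset.sum_congr rfl (fun i _ => h1 i), Finset.sum_add_distrib,
      Finset.sum_const, Finset.sum_ite_eq' Finset.univ e0]
    rw [if_pos (Finset.mem_univ e0), Finset.card_univ, Fintype.card_fin,
      nsmul_eq_mul, mul_one]
    nlinarith
  have hc : 2 / ∑ i : Fin n, v i ^ 2 = α := by
    have hne : s - 1 ≠ 0 := by nlinarith
    have hne2 : s ≠ 0 := by nlinarith
    rw [hsum, hα]
    field_simp
  have hHe : ∀ i j : Fin n, H i j = (if i = j then 1 else 0) - α * (v i * v j) := by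
    intro i j
    rw [hH]
    simp [Matrix.sub_apply, Matrix.one_apply, Matrix.vecMulVec_apply, hc, mul_assoc]
  have hvk : v k = 1 := by rw [hv]; simp [hk]
  have hve0 : v e0 = 1 - s := by rw [hv]; simp
  have hα1 : α * (s - 1) = 1 / s := by
    have hne : s * (s - 1) ≠ 0 := by nlinarith
    rw [hα]; field_simp; exact div_self (ne_of_gt (by linarith))
  have hHk0 : H k e0 = 1 / s := by
    rw [hHe, hvk, hve0, if_neg hk]; rw [← hα1]; ring
  have hHkk : H k k = 1 - α := by
    rw [hHe, hvk, if_pos rfl]; ring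
  have hdiag : (H * Matrix.diagonal lam * H) k k = ∑ j, lam j * (H k j) ^ 2 := by
    rw [Matrix.mul_apply]
    refine Finset.sum_congr rfl fun j _ => ?_
    rw [Matrix.mul_diagonal]
    have hsym : H j k = H k j := by
      rw [hHe, hHe]
      have h2 : (if j = k then (1:ℝ) else 0) = (if k = j then 1 else 0) := by
        simp only [eq_comm]
      rw [h2, mul_comm (v j) (v k)]
    rw [hsym]; ring
  have hksub : ({e0, k} : Finset (Fin n)) ⊆ Finset.univ := Finset.subset_univ _
  rw [hdiag, ← Finset.sum_sdiff hksub, Finset.sum_pair (Ne.symm hk)]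
  have hrest : ∑ j ∈ Finset.univ \ {e0, k}, lam j * H k j ^ 2
      = α ^ 2 * ∑ j ∈ Finset.univ \ {e0, k}, lam j := by
    rw [Finset.mul_sum]
    refine Finset.sum_congr rfl fun j hj => ?_
    simp only [Finset.mem_sdiff, Finset.mem_insert, Finset.mem_singleton] at hj
    push_neg at hj
    have hvj : v j = 1 := by rw [hv]; simp [hj.2.1]
    have hkj : ¬ k = j := fun h => hj.2.2 h.symm
    have : H k j = -α := by rw [hHe, hvk, hvj, if_neg hkj]; ring
    rw [this]; ring
  rw [hrest, hlam0, hHk0, hHkk]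
  have h1n : (1 / s) ^ 2 = 1 / n := by
    rw [← hs2]; rw [div_pow]; norm_num
  rw [h1n]
  ring
end
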